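/- Let a, b > 0 and c be real numbers with coth a + coth b = 2c. Then c > 1 and (a + b)/2 ≥ artanh(1/c). -/

import Mathlib

open Real

/-- The hyperbolic cotangent. -/
noncomputable def Real.coth (x : ℝ) : ℝ := Real.cosh x / Real.sinh x

/-- The inverse hyperbolic tangent. -/
noncomputable def Real.artanh' (x : ℝ) : ℝ := (1 / 2) * Real.log ((1 + x) / (1 - x))

/-- Pointwise consequence of the hyperbolic mirror equation: if `a, b > 0` and
`coth a + coth b = 2c`, then `c > 1` and `(a + b)/2 ≥ artanh(1/c)`. -/
theorem midpoint_bound_of_coth_add_coth (a b c : ℝ) (ha : 0 < a) (hb : 0 < b)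
    (h : Real.coth a + Real.coth b = 2 * c) :
    1 < c ∧ (a + b) / 2 ≥ Real.artanh' (1 / c) := by
  have hsa := Real.sinh_pos_iff.2 ha
  have hsb := Real.sinh_pos_iff.2 hb
  have hone : ∀ x : ℝ, 0 < x → 1 < Real.coth x := by
    intro x hx
    have hsx := Real.sinh_pos_iff.2 hx
    rw [Real.coth, lt_div_iff₀ hsx, one_mul]
    nlinarith [Real.cosh_sub_sinh x, Real.exp_pos (-x)]
  have hc : 1 < c := by
    have h1 := hone a ha
    have h2 := hone b hb
    linarith
  refine ⟨hc, ?_⟩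
  have hcpos : (0:ℝ) < c := by linarith
  set m := (a + b) / 2 with hm
  have hmpos : 0 < m := by positivity
  have hsm := Real.sinh_pos_iff.2 hmpos
  have hcm := Real.cosh_pos m
  have hprod : Real.sinh a * Real.sinh b ≤ Real.sinh m ^ 2 := by
    have h1 : Real.cosh (a + b) = Real.cosh m * Real.cosh m + Real.sinh m * Real.sinh m := by
      rw [show a + b = m + m by rw [hm]; ring, Real.cosh_add]
    have h2 := Real.cosh_add a b
    have h3 := Real.cosh_sub a b
    have h4 := Real.one_le_cosh (a - b)
    have h5 := Real.cosh_sq m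
    nlinarith
  have heq : Real.cosh a * Real.sinh b + Real.cosh b * Real.sinh a
      = 2 * c * (Real.sinh a * Real.sinh b) := by
    have h' := h
    rw [Real.coth, Real.coth] at h'
    field_simp at h'
    linarith
  have hsab2 : Real.sinh a * Real.cosh b + Real.cosh a * Real.sinh b
      = 2 * Real.sinh m * Real.cosh m := by
    rw [← Real.sinh_add, show a + b = m + m by rw [hm]; ring, Real.sinh_add]; ring
  have hkey : Real.cosh m ≤ c * Real.sinh m := by
    have h6 : 2 * Real.sinh m * Real.cosh m ≤ 2 * c * Real.sinh m ^ 2 := by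
      calc 2 * Real.sinh m * Real.cosh m = 2 * c * (Real.sinh a * Real.sinh b) := by
            rw [← heq]; linarith [hsab2]
        _ ≤ 2 * c * Real.sinh m ^ 2 := by nlinarith
    nlinarith
  have hx2 : 1 / c < 1 := by rw [div_lt_one hcpos]; exact hc
  rw [ge_iff_le, Real.artanh']
  have hposratio : (0:ℝ) < (1 + 1/c) / (1 - 1/c) := by
    apply div_pos
    · have : (0:ℝ) < 1/c := by positivity
      linarith
    · linarith
  have hlog : Real.log ((1 + 1/c) / (1 - 1/c)) ≤ 2 * m := by
    rw [Real.log_le_iff_le_exp hposratio]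
    have hexp : Real.exp (2 * m) = (Real.cosh m + Real.sinh m) ^ 2 := by
      rw [Real.cosh_add_sinh, sq, ← Real.exp_add, two_mul]
    rw [hexp, div_le_iff₀ (by linarith)]
    have hid : Real.cosh m ^ 2 - Real.sinh m ^ 2 = 1 := by
      nlinarith [Real.cosh_sq m]
    have h7 : c + 1 ≤ (c - 1) * (Real.cosh m + Real.sinh m) ^ 2 := by
      nlinarith [mul_le_mul_of_nonneg_right hkey (le_of_lt hsm)]
    rw [show (1:ℝ) + 1/c = (c+1)/c by field_simp,
        show (Real.cosh m + Real.sinh m) ^ 2 * ((1:ℝ) - 1/c)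
          = ((c-1) * (Real.cosh m + Real.sinh m) ^ 2)/c by field_simp]
    gcongr
  linarith
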